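/- Energy decay for the extended Maxwell model (Theorem 3.1(ii)): let (u, φ) : [0, T] → X × Ψ be continuously differentiable with u(t) ∈ g + V for all t, satisfying for all t ∈ (0, T): (a) ⟪C(e u(t) − φ(t)), e v⟫_Ψ = ℓ(v) for all v ∈ V, and (b) η φ'(t) + α φ(t) − C(e u(t) − φ(t)) = 0 in Ψ. Then the function t ↦ E(u(t), φ(t)) is differentiable on (0, T) and (d/dt) E(u(t), φ(t)) = −η‖φ'(t)‖_Ψ² ≤ 0. -/
import Mathlib


open scoped RealInnerProductSpace

/-- Energy decay for the extended Maxwell model (Theorem 3.1(ii)):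
for a C¹ solution `(u, φ)` of the weak formulation, the energy `t ↦ E(u(t), φ(t))`
is differentiable on `(0, T)` with derivative `−η‖φ'(t)‖² ≤ 0`. -/
theorem stmt_5
    {X Ψ : Type*}
    [NormedAddCommGroup X] [InnerProductSpace ℝ X] [CompleteSpace X]
    [NormedAddCommGroup Ψ] [InnerProductSpace ℝ Ψ] [CompleteSpace Ψ]
    (V : Submodule ℝ X) (hV : IsClosed (V : Set X))
    (e : X →L[ℝ] Ψ) (C : Ψ →L[ℝ] Ψ)
    (hCsym : ∀ φ ψ : Ψ, ⟪C φ, ψ⟫ = ⟪φ, C ψ⟫)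
    (cstar : ℝ) (hcstar : 0 < cstar)
    (hCcoer : ∀ ψ : Ψ, cstar * ‖ψ‖ ^ 2 ≤ ⟪C ψ, ψ⟫)
    (c₀ : ℝ) (hc₀ : 0 < c₀)
    (hacoer : ∀ v ∈ V, c₀ * ‖v‖ ^ 2 ≤ ⟪C (e v), e v⟫)
    (ℓ : X →L[ℝ] ℝ) (g : X) (η α : ℝ) (hη : 0 < η) (hα : 0 ≤ α)
    (E : X → Ψ → ℝ)
    (hE : ∀ u φ, E u φ =
      (1 / 2) * ⟪C (e u - φ), e u - φ⟫ + (α / 2) * ‖φ‖ ^ 2 - ℓ u)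
    (T : ℝ) (hT : 0 < T)
    (u : ℝ → X) (φ : ℝ → Ψ) (u' : ℝ → X) (φ' : ℝ → Ψ)
    (hu_deriv : ∀ t ∈ Set.Icc (0 : ℝ) T, HasDerivAt u (u' t) t)
    (hφ_deriv : ∀ t ∈ Set.Icc (0 : ℝ) T, HasDerivAt φ (φ' t) t)
    (hu'_cont : ContinuousOn u' (Set.Icc (0 : ℝ) T))
    (hφ'_cont : ContinuousOn φ' (Set.Icc (0 : ℝ) T))
    (hu_mem : ∀ t ∈ Set.Icc (0 : ℝ) T, u t - g ∈ V)
    (heq1 : ∀ t ∈ Set.Ioo (0 : ℝ) T, ∀ v ∈ V, ⟪C (e (u t) - φ t), e v⟫ = ℓ v)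
    (heq2 : ∀ t ∈ Set.Ioo (0 : ℝ) T,
      η • φ' t + α • φ t - C (e (u t) - φ t) = 0) :
    ∀ t ∈ Set.Ioo (0 : ℝ) T,
      HasDerivAt (fun s : ℝ => E (u s) (φ s)) (-(η * ‖φ' t‖ ^ 2)) t ∧
      -(η * ‖φ' t‖ ^ 2) ≤ 0 := by
  intro t ht
  have htI : t ∈ Set.Icc (0:ℝ) T := Set.mem_Icc_of_Ioo ht
  -- u' t ∈ V
  have hu'V : u' t ∈ V := by
    have hder : HasDerivAt (fun s => u s - g) (u' t) t :=
      (hu_deriv t htI).sub_const g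
    have hslope := hasDerivAt_iff_tendsto_slope.mp hder
    refine hV.mem_of_tendsto hslope ?_
    have hnhds : Set.Ioo (0:ℝ) T ∈ nhdsWithin t {t}ᶜ :=
      nhdsWithin_le_nhds (isOpen_Ioo.mem_nhds ht)
    filter_upwards [hnhds] with s hs
    have hm := hu_mem s (Set.mem_Icc_of_Ioo hs)
    have := V.smul_mem ((s - t)⁻¹) (V.sub_mem hm (hu_mem t htI))
    simpa [slope_def_module, sub_sub_sub_cancel_right] using this
  have hu' := hu_deriv t htI
  have hφ' := hφ_deriv t htI
  have heu : HasDerivAt (fun s => e (u s)) (e (u' t)) t :=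
    (e.hasFDerivAt).comp_hasDerivAt t hu'
  have hw : HasDerivAt (fun s => e (u s) - φ s) (e (u' t) - φ' t) t := heu.sub hφ'
  have hCw : HasDerivAt (fun s => C (e (u s) - φ s)) (C (e (u' t) - φ' t)) t :=
    (C.hasFDerivAt).comp_hasDerivAt t hw
  have hq : HasDerivAt (fun s => ⟪C (e (u s) - φ s), e (u s) - φ s⟫)
      (⟪C (e (u t) - φ t), e (u' t) - φ' t⟫ + ⟪C (e (u' t) - φ' t), e (u t) - φ t⟫) t :=
    hCw.inner ℝ hw
  have hn : HasDerivAt (fun s => ⟪φ s, φ s⟫) (⟪φ t, φ' t⟫ + ⟪φ' t, φ t⟫) t :=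
    hφ'.inner ℝ hφ'
  have hℓ : HasDerivAt (fun s => ℓ (u s)) (ℓ (u' t)) t :=
    (ℓ.hasFDerivAt).comp_hasDerivAt t hu'
  have hD : HasDerivAt (fun s : ℝ => E (u s) (φ s))
      ((1/2) * (⟪C (e (u t) - φ t), e (u' t) - φ' t⟫ + ⟪C (e (u' t) - φ' t), e (u t) - φ t⟫)
        + (α/2) * (⟪φ t, φ' t⟫ + ⟪φ' t, φ t⟫) - ℓ (u' t)) t := by
    have hfun : (fun s : ℝ => E (u s) (φ s)) = fun s =>
        (1/2) * ⟪C (e (u s) - φ s), e (u s) - φ s⟫ + (α/2) * ⟪φ s, φ s⟫ - ℓ (u s) := by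
      funext s
      rw [hE, real_inner_self_eq_norm_sq]
    rw [hfun]
    exact ((hq.const_mul _).add (hn.const_mul _)).sub hℓ
  have key : (1/2) * (⟪C (e (u t) - φ t), e (u' t) - φ' t⟫ + ⟪C (e (u' t) - φ' t), e (u t) - φ t⟫)
        + (α/2) * (⟪φ t, φ' t⟫ + ⟪φ' t, φ t⟫) - ℓ (u' t) = -(η * ‖φ' t‖ ^ 2) := by
    have h1 : ⟪C (e (u' t) - φ' t), e (u t) - φ t⟫ = ⟪C (e (u t) - φ t), e (u' t) - φ' t⟫ := by
      rw [hCsym, real_inner_comm]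
    have h2 : ⟪C (e (u t) - φ t), e (u' t)⟫ = ℓ (u' t) := heq1 t ht (u' t) hu'V
    have h3 : C (e (u t) - φ t) = η • φ' t + α • φ t := (sub_eq_zero.mp (heq2 t ht)).symm
    rw [h1, ← h2, inner_sub_right (𝕜 := ℝ) (C (e (u t) - φ t)) (e (u' t)) (φ' t), h3]
    simp only [inner_add_left, real_inner_smul_left]
    rw [real_inner_self_eq_norm_sq, real_inner_comm (φ' t) (φ t)]
    ring
  rw [key] at hD
  refine ⟨hD, ?_⟩
  have : 0 ≤ η * ‖φ' t‖ ^ 2 := mul_nonneg hη.le (sq_nonneg _)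
  linarith
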